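/- Suppose φ : ℝ^{n-1} → ℝ is continuous, nonnegative, bounded, K > 0 is a constant, and c₁ ≥ 0 is a constant such that K φ(x')^{n/(n-2)} = ∫_{ℝ^n_+} P(y, x') (Pφ(y))^{(n+2)/(n-2)} dy + c₁ holds for all x' ∈ ℝ^{n-1}, where Pφ is the Poisson extension of φ and the integral is finite. Then c₁ = 0. -/

import Mathlib

open MeasureTheory

/-- The volume of the unit ball in `ℝ^n`. -/
noncomputable def ballVol (n : ℕ) : ℝ :=
  (volume (Metric.ball (0 : EuclideanSpace ℝ (Fin n)) 1)).toReal

/-- The Poisson kernel of the upper half space `ℝ^{m+1}_+`. -/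
noncomputable def poissonKernelHalf (m : ℕ) (y' x' : EuclideanSpace ℝ (Fin m)) (t : ℝ) : ℝ :=
  (2 / (((m : ℝ) + 1) * ballVol (m + 1))) * t /
    (dist x' y' ^ 2 + t ^ 2) ^ (((m : ℝ) + 1) / 2)

/-- The Poisson extension of `φ : ℝ^m → ℝ` to the upper half space, at `(y', t)`. -/
noncomputable def poissonExtHalf (m : ℕ) (φ : EuclideanSpace ℝ (Fin m) → ℝ)
    (y' : EuclideanSpace ℝ (Fin m)) (t : ℝ) : ℝ :=
  ∫ x', poissonKernelHalf m x' y' t * φ x'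

namespace Stmt12Aux

open Real

noncomputable def A (m : ℕ) : ℝ :=
  ∫ u : EuclideanSpace ℝ (Fin m), ((1:ℝ) + ‖u‖ ^ 2) ^ (-((m:ℝ) + 1) / 2)

lemma hInt (m : ℕ) :
    Integrable (fun u : EuclideanSpace ℝ (Fin m) => ((1:ℝ) + ‖u‖ ^ 2) ^ (-((m:ℝ) + 1) / 2)) := by
  apply integrable_rpow_neg_one_add_norm_sq
  rw [finrank_euclideanSpace_fin]
  linarith

lemma A_pos (m : ℕ) : 0 < A m := by
  rw [A, integral_pos_iff_support_of_nonneg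
    (fun u => rpow_nonneg (by positivity) _) (hInt m)]
  have hsupp : (Function.support fun u : EuclideanSpace ℝ (Fin m) =>
      ((1:ℝ) + ‖u‖ ^ 2) ^ (-((m:ℝ) + 1) / 2)) = Set.univ := by
    ext u
    simp only [Function.mem_support, Set.mem_univ, iff_true]
    exact ne_of_gt (rpow_pos_of_pos (by positivity) _)
  rw [hsupp]
  exact isOpen_univ.measure_pos volume Set.univ_nonempty

lemma den_pos {t : ℝ} (ht : 0 < t) (d : ℝ) : 0 < d ^ 2 + t ^ 2 :=
  add_pos_of_nonneg_of_pos (sq_nonneg d) (pow_pos ht 2)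

lemma slice (m : ℕ) (x' : EuclideanSpace ℝ (Fin m)) {t : ℝ} (ht : 0 < t) :
    Integrable (fun z : EuclideanSpace ℝ (Fin m) =>
        t / (dist x' z ^ 2 + t ^ 2) ^ (((m:ℝ) + 1) / 2)) ∧
    (∫ z : EuclideanSpace ℝ (Fin m),
        t / (dist x' z ^ 2 + t ^ 2) ^ (((m:ℝ) + 1) / 2)) = A m := by
  set f : EuclideanSpace ℝ (Fin m) → ℝ :=
    fun w => t / (‖w‖ ^ 2 + t ^ 2) ^ (((m:ℝ) + 1) / 2) with hf
  have hcomp : (fun z : EuclideanSpace ℝ (Fin m) =>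
      t / (dist x' z ^ 2 + t ^ 2) ^ (((m:ℝ) + 1) / 2)) = fun z => f (z - x') := by
    funext z
    rw [hf]
    simp only [dist_eq_norm, norm_sub_rev x' z]
  have hscale : ∀ u : EuclideanSpace ℝ (Fin m),
      f (t • u) = (t ^ m)⁻¹ * (((1:ℝ) + ‖u‖ ^ 2) ^ (-((m:ℝ) + 1) / 2)) := by
    intro u
    have h1 : ‖t • u‖ ^ 2 + t ^ 2 = t ^ 2 * (1 + ‖u‖ ^ 2) := by
      rw [norm_smul, Real.norm_eq_abs, abs_of_pos ht]; ring
    have h2 : (t ^ 2 * ((1:ℝ) + ‖u‖ ^ 2)) ^ (((m:ℝ) + 1) / 2)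
        = t ^ (m + 1) * ((1:ℝ) + ‖u‖ ^ 2) ^ (((m:ℝ) + 1) / 2) := by
      rw [Real.mul_rpow (by positivity) (by positivity)]
      congr 1
      rw [← Real.rpow_natCast t 2, ← Real.rpow_mul ht.le, ← Real.rpow_natCast t (m + 1)]
      congr 1
      push_cast
      ring
    have hD : (0:ℝ) < ((1:ℝ) + ‖u‖ ^ 2) ^ (((m:ℝ) + 1) / 2) :=
      rpow_pos_of_pos (by positivity) _
    have hneg : (-((m:ℝ) + 1) / 2) = -(((m:ℝ) + 1) / 2) := by ring
    rw [hf]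
    simp only
    rw [h1, h2, hneg, Real.rpow_neg (by positivity)]
    rw [pow_succ]
    field_simp
  have hig : Integrable (fun u : EuclideanSpace ℝ (Fin m) => f (t • u)) := by
    simp only [hscale]
    exact (hInt m).const_mul _
  have hfInt : Integrable f := (integrable_comp_smul_iff volume f (ne_of_gt ht)).1 hig
  have hcalc := Measure.integral_comp_smul (volume : Measure (EuclideanSpace ℝ (Fin m))) f t
  rw [finrank_euclideanSpace_fin] at hcalc
  have hLHS : (∫ u : EuclideanSpace ℝ (Fin m), f (t • u)) = (t ^ m)⁻¹ * A m := by
    simp only [hscale]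
    rw [integral_const_mul]
    rfl
  rw [hLHS, abs_of_pos (by positivity), smul_eq_mul] at hcalc
  have hIf : (∫ u, f u) = A m := by
    have h0 : ((t:ℝ) ^ m)⁻¹ ≠ 0 := by positivity
    exact (mul_left_cancel₀ h0 hcalc).symm
  constructor
  · rw [hcomp]
    exact hfInt.comp_sub_right x'
  · rw [hcomp, integral_sub_right_eq_self f x', hIf]

noncomputable def c0 (m : ℕ) : ℝ := 2 / (((m : ℝ) + 1) * ballVol (m + 1))

lemma ballVol_pos (n : ℕ) : 0 < ballVol n :=
  ENNReal.toReal_pos (Metric.measure_ball_pos _ _ one_pos).ne' measure_ball_lt_top.ne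

lemma c0_pos (m : ℕ) : 0 < c0 m := by
  have := ballVol_pos (m + 1)
  have : (0:ℝ) < ((m : ℝ) + 1) * ballVol (m + 1) := by positivity
  exact div_pos two_pos this

lemma kernel_eq (m : ℕ) (a b : EuclideanSpace ℝ (Fin m)) (t : ℝ) :
    poissonKernelHalf m a b t
      = c0 m * (t / (dist b a ^ 2 + t ^ 2) ^ (((m:ℝ) + 1) / 2)) := by
  rw [poissonKernelHalf, c0, mul_div_assoc]

lemma kernel_nonneg (m : ℕ) (a b : EuclideanSpace ℝ (Fin m)) {t : ℝ} (ht : 0 ≤ t) :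
    0 ≤ poissonKernelHalf m a b t := by
  rw [kernel_eq]
  have := (c0_pos m).le
  positivity

end Stmt12Aux

namespace Stmt12Aux

open Real

lemma ext_lb (m : ℕ) (hm : 1 ≤ m) (φ : EuclideanSpace ℝ (Fin m) → ℝ) (b δ : ℝ)
    (hδ : 0 ≤ δ) (hφ : Continuous φ) (hlb : ∀ x', δ ≤ φ x') (hub : ∀ x', φ x' ≤ b)
    (y' : EuclideanSpace ℝ (Fin m)) {t : ℝ} (ht : 0 < t) :
    δ * (c0 m * A m) ≤ poissonExtHalf m φ y' t := by
  have hker : (fun x' : EuclideanSpace ℝ (Fin m) => poissonKernelHalf m x' y' t)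
      = fun x' => c0 m * (t / (dist y' x' ^ 2 + t ^ 2) ^ (((m:ℝ) + 1) / 2)) := by
    funext x'; exact kernel_eq m x' y' t
  have hsl := slice m y' ht
  have Ik : Integrable (fun x' : EuclideanSpace ℝ (Fin m) =>
      c0 m * (t / (dist y' x' ^ 2 + t ^ 2) ^ (((m:ℝ) + 1) / 2))) := hsl.1.const_mul _
  have hkpos : ∀ x' : EuclideanSpace ℝ (Fin m),
      0 ≤ c0 m * (t / (dist y' x' ^ 2 + t ^ 2) ^ (((m:ℝ) + 1) / 2)) := by
    intro x'
    have := (c0_pos m).le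
    positivity
  have hcontk : Continuous (fun x' : EuclideanSpace ℝ (Fin m) =>
      c0 m * (t / (dist y' x' ^ 2 + t ^ 2) ^ (((m:ℝ) + 1) / 2))) := by
    apply continuous_const.mul
    apply continuous_const.div
    · exact (((continuous_const.dist continuous_id).pow 2).add continuous_const).rpow_const
        (fun x => Or.inr (by positivity))
    · intro x
      exact (rpow_pos_of_pos (den_pos ht _) _).ne'
  have Iφ : Integrable (fun x' : EuclideanSpace ℝ (Fin m) =>
      c0 m * (t / (dist y' x' ^ 2 + t ^ 2) ^ (((m:ℝ) + 1) / 2)) * φ x') := by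
    apply Integrable.mono' (Ik.mul_const b) (hcontk.mul hφ).aestronglyMeasurable
    refine Filter.Eventually.of_forall fun x' => ?_
    simp only [Pi.mul_apply]
    rw [Real.norm_eq_abs, abs_of_nonneg (mul_nonneg (hkpos x') ((hδ.trans (hlb x'))))]
    exact mul_le_mul_of_nonneg_left (hub x') (hkpos x')
  have hmono : (∫ x' : EuclideanSpace ℝ (Fin m),
        c0 m * (t / (dist y' x' ^ 2 + t ^ 2) ^ (((m:ℝ) + 1) / 2)) * δ)
      ≤ ∫ x' : EuclideanSpace ℝ (Fin m),
        c0 m * (t / (dist y' x' ^ 2 + t ^ 2) ^ (((m:ℝ) + 1) / 2)) * φ x' :=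
    integral_mono (Ik.mul_const δ) Iφ
      (fun x' => mul_le_mul_of_nonneg_left (hlb x') (hkpos x'))
  have hval : (∫ x' : EuclideanSpace ℝ (Fin m),
      c0 m * (t / (dist y' x' ^ 2 + t ^ 2) ^ (((m:ℝ) + 1) / 2)) * δ)
      = δ * (c0 m * A m) := by
    rw [integral_mul_const, integral_const_mul, hsl.2]
    ring
  rw [poissonExtHalf]
  simp only [kernel_eq]
  rw [← hval]
  exact hmono

end Stmt12Aux

/-- if `φ ≥ 0` is continuous and bounded on `ℝ^{n-1}`, `K > 0` and `c₁ ≥ 0`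
are constants, and `K φ(x')^{n/(n-2)} = ∫_{ℝ^n_+} P(y,x') (Pφ(y))^{(n+2)/(n-2)} dy + c₁`
for all `x'` (with the integral finite), then `c₁ = 0`.  Here `n = m + 1 ≥ 3`, so
`n/(n-2) = (m+1)/(m-1)` and `(n+2)/(n-2) = (m+3)/(m-1)`. -/
theorem stmt12 (m : ℕ) (hm : 2 ≤ m) (φ : EuclideanSpace ℝ (Fin m) → ℝ) (b : ℝ)
    (hcont : Continuous φ) (hnonneg : ∀ x', 0 ≤ φ x') (hbdd : ∀ x', φ x' ≤ b)
    (K c₁ : ℝ) (hK : 0 < K) (hc₁ : 0 ≤ c₁)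
    (hint : ∀ x' : EuclideanSpace ℝ (Fin m),
      IntegrableOn (fun y : EuclideanSpace ℝ (Fin m) × ℝ =>
          poissonKernelHalf m y.1 x' y.2 *
            poissonExtHalf m φ y.1 y.2 ^ (((m : ℝ) + 3) / ((m : ℝ) - 1)))
        {y : EuclideanSpace ℝ (Fin m) × ℝ | 0 < y.2})
    (heq : ∀ x' : EuclideanSpace ℝ (Fin m),
      K * φ x' ^ (((m : ℝ) + 1) / ((m : ℝ) - 1)) =
        (∫ y in {y : EuclideanSpace ℝ (Fin m) × ℝ | 0 < y.2},
          poissonKernelHalf m y.1 x' y.2 *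
            poissonExtHalf m φ y.1 y.2 ^ (((m : ℝ) + 3) / ((m : ℝ) - 1))) + c₁) :
    c₁ = 0 := by
  classical
  by_contra hne
  have hc : 0 < c₁ := hc₁.lt_of_ne (Ne.symm hne)
  have hm2 : (2:ℝ) ≤ (m:ℝ) := by exact_mod_cast hm
  have hm1 : (0:ℝ) < (m:ℝ) - 1 := by linarith
  have hm1' : (0:ℝ) < (m:ℝ) + 1 := by linarith
  set S : Set (EuclideanSpace ℝ (Fin m) × ℝ) := {y | 0 < y.2} with hSdef
  have hSmeas : MeasurableSet S := measurableSet_Ioi.preimage measurable_snd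
  have hPext_nonneg : ∀ (y' : EuclideanSpace ℝ (Fin m)) (t : ℝ), 0 ≤ t →
      0 ≤ poissonExtHalf m φ y' t := by
    intro y' t ht
    exact integral_nonneg fun x' =>
      mul_nonneg (Stmt12Aux.kernel_nonneg m x' y' ht) (hnonneg x')
  have hI_nonneg : ∀ x' : EuclideanSpace ℝ (Fin m),
      0 ≤ ∫ y in S, poissonKernelHalf m y.1 x' y.2 *
        poissonExtHalf m φ y.1 y.2 ^ (((m : ℝ) + 3) / ((m : ℝ) - 1)) := by
    intro x'
    apply setIntegral_nonneg hSmeas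
    intro y hy
    exact mul_nonneg (Stmt12Aux.kernel_nonneg m y.1 x' (le_of_lt hy))
      (Real.rpow_nonneg (hPext_nonneg y.1 y.2 (le_of_lt hy)) _)
  set q : ℝ := ((m:ℝ) + 1) / ((m:ℝ) - 1) with hq
  set r : ℝ := ((m:ℝ) - 1) / ((m:ℝ) + 1) with hr
  have hrpos : 0 < r := div_pos hm1 hm1'
  set δ : ℝ := (c₁ / K) ^ r with hδ
  have hδpos : 0 < δ := Real.rpow_pos_of_pos (div_pos hc hK) _
  have hφlb : ∀ x', δ ≤ φ x' := by
    intro x'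
    have h1 : c₁ ≤ K * φ x' ^ q := by
      rw [heq x']; linarith [hI_nonneg x']
    have h2 : c₁ / K ≤ φ x' ^ q := by
      rw [div_le_iff₀ hK]; linarith [mul_comm K (φ x' ^ q)]
    have h3 := Real.rpow_le_rpow (le_of_lt (div_pos hc hK)) h2 hrpos.le
    have h4 : (φ x' ^ q) ^ r = φ x' := by
      rw [← Real.rpow_mul (hnonneg x')]
      have hqr : q * r = 1 := by
        rw [hq, hr]; field_simp
      rw [hqr, Real.rpow_one]
    rw [h4] at h3
    exact h3
  set L : ℝ := δ * (Stmt12Aux.c0 m * Stmt12Aux.A m) with hL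
  have hLpos : 0 < L :=
    mul_pos hδpos (mul_pos (Stmt12Aux.c0_pos m) (Stmt12Aux.A_pos m))
  set p : ℝ := ((m:ℝ) + 3) / ((m:ℝ) - 1) with hp
  have hppos : 0 < p := div_pos (by linarith) hm1
  have hPlb : ∀ y ∈ S, L ≤ poissonExtHalf m φ y.1 y.2 := by
    intro y hy
    exact Stmt12Aux.ext_lb m (le_trans one_le_two hm) φ b δ hδpos.le hcont hφlb hbdd y.1 hy
  -- continuity of the kernel on S
  have hFcont : ContinuousOn
      (fun y : EuclideanSpace ℝ (Fin m) × ℝ =>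
        L ^ p * poissonKernelHalf m y.1 (0 : EuclideanSpace ℝ (Fin m)) y.2) S := by
    apply ContinuousOn.mul continuousOn_const
    simp only [poissonKernelHalf]
    apply ContinuousOn.div
    · exact (continuous_const.mul continuous_snd).continuousOn
    · apply Continuous.continuousOn
      exact (((continuous_const.dist continuous_fst).pow 2).add
        (continuous_snd.pow 2)).rpow_const fun y => Or.inr (by positivity)
    · intro y hy
      exact (Real.rpow_pos_of_pos (Stmt12Aux.den_pos hy _) _).ne'
  have hIker : IntegrableOn
      (fun y : EuclideanSpace ℝ (Fin m) × ℝ =>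
        L ^ p * poissonKernelHalf m y.1 (0 : EuclideanSpace ℝ (Fin m)) y.2) S := by
    apply (hint 0).mono' (hFcont.aestronglyMeasurable hSmeas)
    rw [ae_restrict_iff' hSmeas]
    refine Filter.Eventually.of_forall fun y hy => ?_
    have hk0 : 0 ≤ poissonKernelHalf m y.1 (0 : EuclideanSpace ℝ (Fin m)) y.2 :=
      Stmt12Aux.kernel_nonneg m y.1 0 (le_of_lt hy)
    rw [Real.norm_eq_abs, abs_of_nonneg (mul_nonneg (Real.rpow_nonneg hLpos.le p) hk0)]
    have hle : L ^ p ≤ poissonExtHalf m φ y.1 y.2 ^ p :=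
      Real.rpow_le_rpow hLpos.le (hPlb y hy) hppos.le
    calc L ^ p * poissonKernelHalf m y.1 0 y.2
        ≤ poissonExtHalf m φ y.1 y.2 ^ p * poissonKernelHalf m y.1 0 y.2 :=
          mul_le_mul_of_nonneg_right hle hk0
      _ = poissonKernelHalf m y.1 0 y.2 * poissonExtHalf m φ y.1 y.2 ^ p := mul_comm _ _
  -- the lintegral of the lower bound is infinite
  set F : EuclideanSpace ℝ (Fin m) × ℝ → ℝ :=
    fun y => L ^ p * poissonKernelHalf m y.1 (0 : EuclideanSpace ℝ (Fin m)) y.2 with hF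
  have hfin : (∫⁻ y in S, ENNReal.ofReal (F y)) < ⊤ :=
    lt_of_le_of_lt (lintegral_mono fun y => Real.ofReal_le_enorm (F y)) hIker.2
  have hSprod : S = (Set.univ : Set (EuclideanSpace ℝ (Fin m))) ×ˢ Set.Ioi (0:ℝ) := by
    ext y; simp [hSdef, Set.mem_prod]
  have hres : (volume : Measure (EuclideanSpace ℝ (Fin m) × ℝ)).restrict S
      = Measure.prod volume (volume.restrict (Set.Ioi 0)) := by
    rw [Measure.volume_eq_prod, hSprod, ← Measure.prod_restrict, Measure.restrict_univ]
  have hgmeas : AEMeasurable (fun y => ENNReal.ofReal (F y))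
      (Measure.prod (volume : Measure (EuclideanSpace ℝ (Fin m))) (volume.restrict (Set.Ioi 0))) := by
    rw [← hres]
    exact ENNReal.measurable_ofReal.comp_aemeasurable (hFcont.aemeasurable hSmeas)
  have hinner : ∀ t ∈ Set.Ioi (0:ℝ),
      (∫⁻ x' : EuclideanSpace ℝ (Fin m), ENNReal.ofReal (F (x', t)))
        = ENNReal.ofReal (L ^ p * (Stmt12Aux.c0 m * Stmt12Aux.A m)) := by
    intro t ht
    have hsl := Stmt12Aux.slice m (0 : EuclideanSpace ℝ (Fin m)) ht
    have hFeq : ∀ x' : EuclideanSpace ℝ (Fin m), F (x', t)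
        = L ^ p * (Stmt12Aux.c0 m *
            (t / (dist (0 : EuclideanSpace ℝ (Fin m)) x' ^ 2 + t ^ 2) ^ (((m:ℝ) + 1) / 2))) := by
      intro x'
      rw [hF]
      simp only
      rw [Stmt12Aux.kernel_eq]
    have hi : Integrable (fun x' : EuclideanSpace ℝ (Fin m) =>
        L ^ p * (Stmt12Aux.c0 m *
          (t / (dist (0 : EuclideanSpace ℝ (Fin m)) x' ^ 2 + t ^ 2) ^ (((m:ℝ) + 1) / 2)))) :=
      (hsl.1.const_mul _).const_mul _
    have hnn : (0 : EuclideanSpace ℝ (Fin m) → ℝ) ≤ᵐ[volume]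
        fun x' => L ^ p * (Stmt12Aux.c0 m *
          (t / (dist (0 : EuclideanSpace ℝ (Fin m)) x' ^ 2 + t ^ 2) ^ (((m:ℝ) + 1) / 2))) := by
      refine Filter.Eventually.of_forall fun x' => ?_
      have h1 := hLpos.le
      have h2 := (Stmt12Aux.c0_pos m).le
      have h3 := (show (0:ℝ) < t from ht).le
      positivity
    have hval : (∫ x' : EuclideanSpace ℝ (Fin m),
        L ^ p * (Stmt12Aux.c0 m *
          (t / (dist (0 : EuclideanSpace ℝ (Fin m)) x' ^ 2 + t ^ 2) ^ (((m:ℝ) + 1) / 2))))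
        = L ^ p * (Stmt12Aux.c0 m * Stmt12Aux.A m) := by
      rw [integral_const_mul, integral_const_mul, hsl.2]
    simp only [hFeq]
    rw [← ofReal_integral_eq_lintegral_ofReal hi hnn, hval]
  have htop : (∫⁻ y in S, ENNReal.ofReal (F y)) = ⊤ := by
    have : (∫⁻ y in S, ENNReal.ofReal (F y))
        = ∫⁻ y, ENNReal.ofReal (F y)
            ∂(Measure.prod (volume : Measure (EuclideanSpace ℝ (Fin m)))
              (volume.restrict (Set.Ioi 0))) := by
      rw [hres]
    rw [this, MeasureTheory.lintegral_prod_symm _ hgmeas]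
    rw [setLIntegral_congr_fun measurableSet_Ioi hinner]
    rw [setLIntegral_const, Real.volume_Ioi, ENNReal.mul_top]
    exact (ENNReal.ofReal_pos.mpr (mul_pos (Real.rpow_pos_of_pos hLpos p)
      (mul_pos (Stmt12Aux.c0_pos m) (Stmt12Aux.A_pos m)))).ne'
  exact absurd htop hfin.ne
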